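/- Let K be a field of characteristic 0 and let X be the generic strictly upper triangular 2×2 block structure: explicitly, for the parabolic subalgebra of gl(8,K) with block sizes (2,4,2), consider the polynomial ring A = K[x_{ij}] in variables x_{ij} for (i,j) in the nilradical positions (i.e., 1≤i≤2 < j≤8, or 3≤i≤6 < 7≤j≤8). Define M1 = x_{23}, M2 = x_{13}x_{24} − x_{14}x_{23}, N1 = x_{67}, N2 = x_{57}x_{68} − x_{58}x_{67}, L11 = x_{23}x_{37} + x_{24}x_{47} + x_{25}x_{57} + x_{26}x_{67}, L12 = (x_{13}x_{24} − x_{14}x_{23})x_{47} + (x_{13}x_{25} − x_{15}x_{23})x_{57} + (x_{13}x_{26} − x_{16}x_{23})x_{67}, L21 = x_{23}(x_{37}x_{68} − x_{38}x_{67}) + x_{24}(x_{47}x_{68} − x_{48}x_{67}) + x_{25}(x_{57}x_{68} − x_{58}x_{67}), L22 = (x_{13}x_{24} − x_{14}x_{23})(x_{47}x_{68} − x_{48}x_{67}) + (x_{13}x_{25} − x_{15}x_{23})(x_{57}x_{68} − x_{58}x_{67}), and D = the minor of the matrix X² with rows {1,2} and columns {7,8}, where X is the 8×8 matrix with entries x_{ij}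 in the nilradical positions and 0 elsewhere. Then the identity L12·L21 − L11·L22 = M1·N1·D holds in A. -/

import Mathlib

/- Statement 0: the identity L12·L21 − L11·L22 = M1·N1·D in the coordinate ring of the
(2,4,2) nilradical of gl(8,K).  Variables are indexed 0-based: x_{ij} (1-based) is
`X (i-1, j-1)`.  The ambient polynomial ring contains all pairs, but only nilradical
variables occur in the polynomials and in the generic matrix `Xgen`. -/

noncomputable section

open MvPolynomial

variable (K : Type*) [Field K] [CharZero K]

/-- nilradical positions of the (2,4,2) parabolic (0-based). -/
def NilPos242 (i j : Fin 8) : Prop :=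
  (i.val < 2 ∧ 2 ≤ j.val) ∨ (2 ≤ i.val ∧ i.val < 6 ∧ 6 ≤ j.val)

instance (i j : Fin 8) : Decidable (NilPos242 i j) := by
  unfold NilPos242; infer_instance

abbrev A8 := MvPolynomial (Fin 8 × Fin 8) K

def pM1 : A8 K := X (1,2)
def pM2 : A8 K := X (0,2) * X (1,3) - X (0,3) * X (1,2)
def pN1 : A8 K := X (5,6)
def pN2 : A8 K := X (4,6) * X (5,7) - X (4,7) * X (5,6)
def pL11 : A8 K :=
  X (1,2) * X (2,6) + X (1,3) * X (3,6) + X (1,4) * X (4,6) + X (1,5) * X (5,6)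
def pL12 : A8 K :=
  (X (0,2) * X (1,3) - X (0,3) * X (1,2)) * X (3,6) +
  (X (0,2) * X (1,4) - X (0,4) * X (1,2)) * X (4,6) +
  (X (0,2) * X (1,5) - X (0,5) * X (1,2)) * X (5,6)
def pL21 : A8 K :=
  X (1,2) * (X (2,6) * X (5,7) - X (2,7) * X (5,6)) +
  X (1,3) * (X (3,6) * X (5,7) - X (3,7) * X (5,6)) +
  X (1,4) * (X (4,6) * X (5,7) - X (4,7) * X (5,6))
def pL22 : A8 K :=
  (X (0,2) * X (1,3) - X (0,3) * X (1,2)) * (X (3,6) * X (5,7) - X (3,7) * X (5,6)) +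
  (X (0,2) * X (1,4) - X (0,4) * X (1,2)) * (X (4,6) * X (5,7) - X (4,7) * X (5,6))

/-- the generic nilradical matrix: `x_{ij}` at nilradical positions, `0` elsewhere. -/
def Xgen : Matrix (Fin 8) (Fin 8) (A8 K) :=
  fun i j => if NilPos242 i j then X (i, j) else 0

/-- `D` = minor of `X²` on rows {1,2}, columns {7,8} (1-based). -/
def pD : A8 K :=
  (Xgen K * Xgen K) 0 6 * (Xgen K * Xgen K) 1 7 -
  (Xgen K * Xgen K) 0 7 * (Xgen K * Xgen K) 1 6

theorem L_identity :
    pL12 K * pL21 K - pL11 K * pL22 K = pM1 K * pN1 K * pD K := by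
  unfold pL11 pL12 pL21 pL22 pM1 pN1 pD
  simp only [Matrix.mul_apply, Fin.sum_univ_eight]
  simp only [Xgen]
  simp (config := { decide := true }) only [NilPos242, Fin.isValue, if_true, if_false]
  ring

end
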